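/- Let H be an m×n complex matrix (m ≤ n) and Γ = diag(γ_1,...,γ_m) with all γ_k > 0. Then lim_{P→∞} [ log det(I + (P/m)·Γ·H H^H) - log det(I + (P/m)·H H^H) - ∑_{k=1}^m log γ_k ] = 0, provided H H^H is positive definite. -/

import Mathlib

open Matrix Filter Finset
open scoped ComplexOrder

/-- Asymmetric average SNRs `γ_k` shift the high-SNR sum rate by `∑_k log γ_k`:
`log det(I + (P/m) Γ H Hᴴ) - log det(I + (P/m) H Hᴴ) - ∑_k log γ_k → 0` as `P → ∞`. -/
theorem stmt_17 (m n : ℕ) (hm : 0 < m) (hmn : m ≤ n)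
    (H : Matrix (Fin m) (Fin n) ℂ) (hH : (H * H.conjTranspose).PosDef)
    (γ : Fin m → ℝ) (hγ : ∀ k, 0 < γ k) :
    Tendsto
      (fun P : ℝ =>
        Real.log ((1 + ((P / m : ℝ) : ℂ) •
              (Matrix.diagonal (fun k => (γ k : ℂ)) * (H * H.conjTranspose))).det.re)
          - Real.log ((1 + ((P / m : ℝ) : ℂ) • (H * H.conjTranspose)).det.re)
          - ∑ k, Real.log (γ k))
      atTop (nhds 0) := by
  set M := H * H.conjTranspose with hMdef
  set G := Matrix.diagonal (fun k => (γ k : ℂ)) with hGdef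
  -- positivity of det M (real part)
  have hdet := hH.det_pos
  rw [Complex.lt_def] at hdet
  have hd : 0 < M.det.re := by simpa using hdet.1
  -- product of gammas
  have hp : 0 < ∏ k, γ k := Finset.prod_pos fun k _ => hγ k
  -- (G * M).det.re = (∏ γ) * M.det.re
  have hGM : (G * M).det.re = (∏ k, γ k) * M.det.re := by
    rw [Matrix.det_mul, hGdef, Matrix.det_diagonal]
    rw [show (∏ k, (γ k : ℂ)) = ((∏ k, γ k : ℝ) : ℂ) by push_cast; ring]
    exact Complex.re_ofReal_mul _ _
  -- c P := P / m tends to atTop; (c P)⁻¹ → 0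
  have hc : Tendsto (fun P : ℝ => P / m) atTop atTop :=
    Tendsto.atTop_div_const (by exact_mod_cast hm) tendsto_id
  have hcinv : Tendsto (fun P : ℝ => ((P / m)⁻¹ : ℝ)) atTop (nhds 0) :=
    tendsto_inv_atTop_zero.comp hc
  have hcinvC : Tendsto (fun P : ℝ => (((P / m)⁻¹ : ℝ) : ℂ)) atTop (nhds 0) := by
    have := (Complex.continuous_ofReal.tendsto 0).comp hcinv
    simp only [Function.comp_def, Complex.ofReal_zero] at this
    exact this
  -- generic convergence lemma
  have key : ∀ N : Matrix (Fin m) (Fin m) ℂ,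
      Tendsto (fun P : ℝ => ((((P / m)⁻¹ : ℝ) : ℂ) • (1 : Matrix (Fin m) (Fin m) ℂ) + N).det.re)
        atTop (nhds N.det.re) := by
    intro N
    have h1 : Tendsto (fun P : ℝ => (((P / m)⁻¹ : ℝ) : ℂ) • (1 : Matrix (Fin m) (Fin m) ℂ) + N)
        atTop (nhds ((0 : ℂ) • 1 + N)) := (hcinvC.smul_const _).add_const N
    rw [zero_smul, zero_add] at h1
    exact (Complex.continuous_re.tendsto _).comp
      (((continuous_id.matrix_det).tendsto N).comp h1)
  -- target limit of the transformed function
  have hlim : Tendsto (fun P : ℝ =>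
      Real.log ((((P / m)⁻¹ : ℝ) : ℂ) • (1 : Matrix (Fin m) (Fin m) ℂ) + G * M).det.re
        - Real.log ((((P / m)⁻¹ : ℝ) : ℂ) • (1 : Matrix (Fin m) (Fin m) ℂ) + M).det.re
        - ∑ k, Real.log (γ k)) atTop (nhds 0) := by
    have l1 := (Real.continuousAt_log (by rw [hGM]; positivity)).tendsto.comp (key (G * M))
    have l2 := (Real.continuousAt_log hd.ne').tendsto.comp (key M)
    have := (l1.sub l2).sub_const (∑ k, Real.log (γ k))
    have heq : Real.log (G * M).det.re - Real.log M.det.re - ∑ k, Real.log (γ k) = 0 := by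
      rw [hGM, Real.log_mul hp.ne' hd.ne', Real.log_prod (fun k _ => (hγ k).ne')]
      ring
    rw [heq] at this
    exact this
  -- eventual equality
  refine hlim.congr' ?_
  have hev1 : ∀ᶠ P : ℝ in atTop,
      0 < ((((P / m)⁻¹ : ℝ) : ℂ) • (1 : Matrix (Fin m) (Fin m) ℂ) + G * M).det.re :=
    (key (G * M)).eventually (eventually_gt_nhds (by rw [hGM]; positivity))
  have hev2 : ∀ᶠ P : ℝ in atTop,
      0 < ((((P / m)⁻¹ : ℝ) : ℂ) • (1 : Matrix (Fin m) (Fin m) ℂ) + M).det.re :=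
    (key M).eventually (eventually_gt_nhds hd)
  have hev3 : ∀ᶠ P : ℝ in atTop, 0 < P / m := hc.eventually_gt_atTop 0
  filter_upwards [hev1, hev2, hev3] with P h1 h2 h3
  set c : ℝ := P / m with hcdef
  have hscale : ∀ N : Matrix (Fin m) (Fin m) ℂ,
      (1 + ((c : ℝ) : ℂ) • N).det.re
        = c ^ m * ((((c⁻¹ : ℝ)) : ℂ) • (1 : Matrix (Fin m) (Fin m) ℂ) + N).det.re := by
    intro N
    have hne : ((c : ℝ) : ℂ) ≠ 0 := by exact_mod_cast h3.ne'
    have : (1 : Matrix (Fin m) (Fin m) ℂ) + ((c : ℝ) : ℂ) • N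
        = ((c : ℝ) : ℂ) • ((((c⁻¹ : ℝ)) : ℂ) • (1 : Matrix (Fin m) (Fin m) ℂ) + N) := by
      rw [smul_add, smul_smul]
      push_cast
      rw [mul_inv_cancel₀ hne, one_smul]
    rw [this, Matrix.det_smul, Fintype.card_fin]
    rw [show ((c : ℝ) : ℂ) ^ m = ((c ^ m : ℝ) : ℂ) by push_cast; ring]
    exact Complex.re_ofReal_mul _ _
  have hcpow : (0:ℝ) < c ^ m := pow_pos h3 m
  rw [hscale (G * M), hscale M,
      Real.log_mul hcpow.ne' h1.ne', Real.log_mul hcpow.ne' h2.ne']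
  ring
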